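/- Let V be a self-adjoint n×n matrix and E ∈ ℝ with E·1 - V invertible, let Ĥ = ℂ^L, and let π⁻, π⁺ be coisometries ℂ^n → ℂ^L with orthogonal ranges such that G^{-,+} = π⁻(E·1-V)⁻¹(π⁺)* is invertible. Let T̂ be an invertible L×L matrix. Then the reduced transfer matrix T̂^E = A · B, with A = ((G⁻⁺)⁻¹, -(G⁻⁺)⁻¹G⁻⁻; G⁺⁺(G⁻⁺)⁻¹, G⁺⁻ - G⁺⁺(G⁻⁺)⁻¹G⁻⁻) and B = (T̂⁻¹, 0; 0, T̂*), satisfies (T̂^E)* I ∂_E T̂^E ≥ 0. -/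

import Mathlib

open Matrix
open scoped ComplexOrder

attribute [local instance] Matrix.frobeniusNormedAddCommGroup Matrix.frobeniusNormedSpace

/-- The matrix `ℐ = (0,-1;1,0)` in `L×L` blocks. -/
def Iop (L : ℕ) : Matrix (Fin L ⊕ Fin L) (Fin L ⊕ Fin L) ℂ :=
  Matrix.fromBlocks 0 (-1) 1 0

variable {n L : ℕ}

/-- `G^{x,y}(e) = π^x (e·1 - V)⁻¹ (π^y)*`. -/
noncomputable def Gblk (V : Matrix (Fin n) (Fin n) ℂ)
    (π₁ π₂ : Matrix (Fin L) (Fin n) ℂ) (e : ℝ) : Matrix (Fin L) (Fin L) ℂ :=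
  π₁ * ((e : ℂ) • (1 : Matrix (Fin n) (Fin n) ℂ) - V)⁻¹ * π₂ᴴ

/-- The matrix `𝒜^e = ((G⁻⁺)⁻¹, -(G⁻⁺)⁻¹G⁻⁻; G⁺⁺(G⁻⁺)⁻¹, G⁺⁻ - G⁺⁺(G⁻⁺)⁻¹G⁻⁻)`. -/
noncomputable def redA (V : Matrix (Fin n) (Fin n) ℂ)
    (πm πp : Matrix (Fin L) (Fin n) ℂ) (e : ℝ) :
    Matrix (Fin L ⊕ Fin L) (Fin L ⊕ Fin L) ℂ :=
  Matrix.fromBlocks (Gblk V πm πp e)⁻¹ (-((Gblk V πm πp e)⁻¹ * Gblk V πm πm e))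
    (Gblk V πp πp e * (Gblk V πm πp e)⁻¹)
    (Gblk V πp πm e - Gblk V πp πp e * (Gblk V πm πp e)⁻¹ * Gblk V πm πm e)

/-- The reduced transfer matrix `𝒯̂^e = 𝒜^e · (That⁻¹, 0; 0, That*)`. -/
noncomputable def redT (V : Matrix (Fin n) (Fin n) ℂ)
    (πm πp : Matrix (Fin L) (Fin n) ℂ) (That : Matrix (Fin L) (Fin L) ℂ) (e : ℝ) :
    Matrix (Fin L ⊕ Fin L) (Fin L ⊕ Fin L) ℂ :=
  redA V πm πp e * Matrix.fromBlocks That⁻¹ 0 0 Thatᴴ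

attribute [local instance] Matrix.frobeniusNormedRing Matrix.frobeniusNormedAlgebra

private lemma hasDerivAt_linearMap' {α β γ δ : Type*} [Fintype α] [Fintype β] [Fintype γ]
    [Fintype δ] (φ : Matrix α β ℂ →ₗ[ℝ] Matrix γ δ ℂ)
    {f : ℝ → Matrix α β ℂ} {f' : Matrix α β ℂ} {x : ℝ} (hf : HasDerivAt f f' x) :
    HasDerivAt (fun e => φ (f e)) (φ f') x :=
  φ.toContinuousLinearMap.hasFDerivAt.comp_hasDerivAt x hf

private lemma hasDerivAt_sandwich {α β γ δ : Type*} [Fintype α] [Fintype β] [Fintype γ]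
    [Fintype δ] (P : Matrix γ α ℂ) (Q : Matrix β δ ℂ)
    {f : ℝ → Matrix α β ℂ} {f' : Matrix α β ℂ} {x : ℝ} (hf : HasDerivAt f f' x) :
    HasDerivAt (fun e => P * f e * Q) (P * f' * Q) x :=
  hasDerivAt_linearMap' (α := α) (β := β) (γ := γ) (δ := δ)
    { toFun := fun X => P * X * Q
      map_add' := fun X Y => by show P * (X + Y) * Q = _; rw [Matrix.mul_add, Matrix.add_mul]
      map_smul' := fun c X => by
        show P * (c • X) * Q = c • (P * X * Q); rw [Matrix.mul_smul, Matrix.smul_mul] } hf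

private lemma hasDerivAt_matrix_inv {m : ℕ} {f : ℝ → Matrix (Fin m) (Fin m) ℂ}
    {f' : Matrix (Fin m) (Fin m) ℂ} {x : ℝ} (hf : HasDerivAt f f' x) (hu : IsUnit (f x)) :
    HasDerivAt (fun e => (f e)⁻¹) (-((f x)⁻¹ * f' * (f x)⁻¹)) x := by
  have h1 := (hasFDerivAt_ringInverse (𝕜 := ℝ) hu.unit)
  rw [hu.unit_spec] at h1
  have h2 := h1.comp_hasDerivAt x hf
  have he : (fun e => (f e)⁻¹) = fun e => Ring.inverse (f e) := by
    funext e; exact Matrix.nonsing_inv_eq_ringInverse _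
  rw [he]
  have hc : (↑hu.unit⁻¹ : Matrix (Fin m) (Fin m) ℂ) = (f x)⁻¹ := by
    rw [Matrix.coe_units_inv, hu.unit_spec]
  refine h2.congr_deriv ?_
  simp [hc]

private lemma hasDerivAt_fromBlocks {f g h k : ℝ → Matrix (Fin L) (Fin L) ℂ}
    {f' g' h' k' : Matrix (Fin L) (Fin L) ℂ} {x : ℝ}
    (hf : HasDerivAt f f' x) (hg : HasDerivAt g g' x)
    (hh : HasDerivAt h h' x) (hk : HasDerivAt k k' x) :
    HasDerivAt (fun e => fromBlocks (f e) (g e) (h e) (k e)) (fromBlocks f' g' h' k') x := by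
  have e1 := hasDerivAt_linearMap' (f := f)
    { toFun := fun X => (fromBlocks X 0 0 0 : Matrix (Fin L ⊕ Fin L) (Fin L ⊕ Fin L) ℂ)
      map_add' := fun X Y => by ext (i|i) (j|j) <;> simp [fromBlocks]
      map_smul' := fun c X => by ext (i|i) (j|j) <;> simp [fromBlocks] } hf
  have e2 := hasDerivAt_linearMap' (f := g)
    { toFun := fun X => (fromBlocks 0 X 0 0 : Matrix (Fin L ⊕ Fin L) (Fin L ⊕ Fin L) ℂ)
      map_add' := fun X Y => by ext (i|i) (j|j) <;> simp [fromBlocks]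
      map_smul' := fun c X => by ext (i|i) (j|j) <;> simp [fromBlocks] } hg
  have e3 := hasDerivAt_linearMap' (f := h)
    { toFun := fun X => (fromBlocks 0 0 X 0 : Matrix (Fin L ⊕ Fin L) (Fin L ⊕ Fin L) ℂ)
      map_add' := fun X Y => by ext (i|i) (j|j) <;> simp [fromBlocks]
      map_smul' := fun c X => by ext (i|i) (j|j) <;> simp [fromBlocks] } hh
  have e4 := hasDerivAt_linearMap' (f := k)
    { toFun := fun X => (fromBlocks 0 0 0 X : Matrix (Fin L ⊕ Fin L) (Fin L ⊕ Fin L) ℂ)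
      map_add' := fun X Y => by ext (i|i) (j|j) <;> simp [fromBlocks]
      map_smul' := fun c X => by ext (i|i) (j|j) <;> simp [fromBlocks] } hk
  have e := ((e1.add e2).add e3).add e4
  simp only [LinearMap.coe_mk, AddHom.coe_mk] at e
  convert e using 1 <;> [rfl; rfl; rfl; skip; simp [Matrix.fromBlocks_add]]
  funext y
  simp [Matrix.fromBlocks_add]

theorem reduced_transfer_monotone
    (V : Matrix (Fin n) (Fin n) ℂ) (hV : V.IsHermitian) (E : ℝ)
    (hE : IsUnit ((E : ℂ) • (1 : Matrix (Fin n) (Fin n) ℂ) - V))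
    (πm πp : Matrix (Fin L) (Fin n) ℂ)
    (hπm : πm * πmᴴ = 1) (hπp : πp * πpᴴ = 1) (horth : πp * πmᴴ = 0)
    (hG : IsUnit (Gblk V πm πp E))
    (That : Matrix (Fin L) (Fin L) ℂ) (hThat : IsUnit That)
    (D : Matrix (Fin L ⊕ Fin L) (Fin L ⊕ Fin L) ℂ)
    (hD : HasDerivAt (redT V πm πp That) D E) :
    Matrix.PosSemidef ((redT V πm πp That E)ᴴ * Iop L * D) := by
  classical
  -- abbreviations
  set M : Matrix (Fin n) (Fin n) ℂ := ((E : ℂ) • (1 : Matrix (Fin n) (Fin n) ℂ) - V)⁻¹ with hMdef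
  have hMH : Mᴴ = M := by
    rw [hMdef, Matrix.conjTranspose_nonsing_inv]
    congr 1
    rw [Matrix.conjTranspose_sub, hV.eq, Matrix.conjTranspose_smul, Matrix.conjTranspose_one,
      Complex.star_def, Complex.conj_ofReal]
  -- derivative of the resolvent
  have hbase : HasDerivAt (fun e : ℝ => (e : ℂ) • (1 : Matrix (Fin n) (Fin n) ℂ) - V)
      (1 : Matrix (Fin n) (Fin n) ℂ) E := by
    have h1 : HasDerivAt (fun e : ℝ => e • (1 : Matrix (Fin n) (Fin n) ℂ))
        ((1 : ℝ) • (1 : Matrix (Fin n) (Fin n) ℂ)) E := (hasDerivAt_id E).smul_const _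
    have h2 := h1.sub_const V
    simp only [one_smul] at h2
    have h3 : (fun e : ℝ => (e : ℂ) • (1 : Matrix (Fin n) (Fin n) ℂ) - V) =
        fun x : ℝ => x • (1 : Matrix (Fin n) (Fin n) ℂ) - V := by
      funext x; rw [Complex.coe_smul]
    rw [h3]; exact h2
  have hMd : HasDerivAt (fun e : ℝ => ((e : ℂ) • (1 : Matrix (Fin n) (Fin n) ℂ) - V)⁻¹)
      (-(M * M)) E := by
    have := hasDerivAt_matrix_inv hbase hE
    simpa [hMdef] using this
  -- derivatives of the G-blocks
  have hGd : ∀ π₁ π₂ : Matrix (Fin L) (Fin n) ℂ,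
      HasDerivAt (Gblk V π₁ π₂) (-((π₁ * M) * (M * π₂ᴴ))) E := by
    intro π₁ π₂
    have h := hasDerivAt_sandwich π₁ (π₂ᴴ) hMd
    have hv : π₁ * (-(M * M)) * π₂ᴴ = -((π₁ * M) * (M * π₂ᴴ)) := by
      simp [Matrix.mul_neg, Matrix.neg_mul, Matrix.mul_assoc]
    rw [hv] at h
    exact h
  set A₀ : Matrix (Fin n) (Fin L) ℂ := M * πpᴴ with hA₀
  set B₀ : Matrix (Fin n) (Fin L) ℂ := M * πmᴴ with hB₀
  set g := Gblk V πm πp E with hgdef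
  set hm := Gblk V πm πm E with hhdef
  set pp := Gblk V πp πp E with hpdef
  set qq := Gblk V πp πm E with hqdef
  set gi := g⁻¹ with hgidef
  set dg : Matrix (Fin L) (Fin L) ℂ := -((πm * M) * (M * πpᴴ)) with hdg
  set dh : Matrix (Fin L) (Fin L) ℂ := -((πm * M) * (M * πmᴴ)) with hdh
  set dp : Matrix (Fin L) (Fin L) ℂ := -((πp * M) * (M * πpᴴ)) with hdp
  set dq : Matrix (Fin L) (Fin L) ℂ := -((πp * M) * (M * πmᴴ)) with hdq
  have hgd : HasDerivAt (Gblk V πm πp) dg E := hGd πm πp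
  have hhd : HasDerivAt (Gblk V πm πm) dh E := hGd πm πm
  have hpd : HasDerivAt (Gblk V πp πp) dp E := hGd πp πp
  have hqd : HasDerivAt (Gblk V πp πm) dq E := hGd πp πm
  set dgi : Matrix (Fin L) (Fin L) ℂ := -(gi * dg * gi) with hdgi
  have hgid : HasDerivAt (fun e => (Gblk V πm πp e)⁻¹) dgi E :=
    hasDerivAt_matrix_inv hgd hG
  -- derivative of redA
  set dA : Matrix (Fin L ⊕ Fin L) (Fin L ⊕ Fin L) ℂ :=
    Matrix.fromBlocks dgi (-(dgi * hm + gi * dh))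
      (dp * gi + pp * dgi) (dq - ((dp * gi + pp * dgi) * hm + pp * gi * dh)) with hdA
  have hAd : HasDerivAt (redA V πm πp) dA E := by
    have h12 : HasDerivAt (fun e => -((Gblk V πm πp e)⁻¹ * Gblk V πm πm e))
        (-(dgi * hm + gi * dh)) E := (hgid.mul hhd).neg
    have h21 : HasDerivAt (fun e => Gblk V πp πp e * (Gblk V πm πp e)⁻¹)
        (dp * gi + pp * dgi) E := hpd.mul hgid
    have h22 : HasDerivAt
        (fun e => Gblk V πp πm e - Gblk V πp πp e * (Gblk V πm πp e)⁻¹ * Gblk V πm πm e)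
        (dq - ((dp * gi + pp * dgi) * hm + pp * gi * dh)) E := hqd.sub ((hpd.mul hgid).mul hhd)
    exact hasDerivAt_fromBlocks hgid h12 h21 h22
  set Bc : Matrix (Fin L ⊕ Fin L) (Fin L ⊕ Fin L) ℂ :=
    Matrix.fromBlocks That⁻¹ 0 0 Thatᴴ with hBc
  have hTd : HasDerivAt (redT V πm πp That) (dA * Bc) E := hAd.mul_const Bc
  have hDval : D = dA * Bc := hD.unique hTd
  -- the key algebraic identity
  set F : Matrix (Fin n) (Fin L ⊕ Fin L) ℂ :=
    Matrix.fromCols (A₀ * gi) (B₀ - A₀ * gi * hm) with hF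
  have hdet : IsUnit g.det := (Matrix.isUnit_iff_isUnit_det _).mp hG
  have hc1 : g * gi = 1 := Matrix.mul_nonsing_inv _ hdet
  have hc2 : ∀ X : Matrix (Fin L) (Fin L) ℂ, g * (gi * X) = X := fun X =>
    Matrix.mul_nonsing_inv_cancel_left _ _ hdet
  have hGexp : ∀ π₁ π₂ : Matrix (Fin L) (Fin n) ℂ, Gblk V π₁ π₂ E = π₁ * M * π₂ᴴ :=
    fun _ _ => rfl
  have hmH : hmᴴ = hm := by
    rw [hhdef, hGexp]
    simp [Matrix.conjTranspose_mul, hMH, Matrix.mul_assoc]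
  have hppH : ppᴴ = pp := by
    rw [hpdef, hGexp]
    simp [Matrix.conjTranspose_mul, hMH, Matrix.mul_assoc]
  have hqqH : qqᴴ = g := by
    rw [hqdef, hgdef, hGexp, hGexp]
    simp [Matrix.conjTranspose_mul, hMH, Matrix.mul_assoc]
  -- relations between the derivative blocks and A₀, B₀
  have hBA : B₀ᴴ * A₀ = -dg := by
    rw [hB₀, hA₀, hdg]; simp [Matrix.conjTranspose_mul, hMH, Matrix.mul_assoc]
  have hBB : B₀ᴴ * B₀ = -dh := by
    rw [hB₀, hdh]; simp [Matrix.conjTranspose_mul, hMH, Matrix.mul_assoc]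
  have hAA : A₀ᴴ * A₀ = -dp := by
    rw [hA₀, hdp]; simp [Matrix.conjTranspose_mul, hMH, Matrix.mul_assoc]
  have hAB : A₀ᴴ * B₀ = -dq := by
    rw [hA₀, hB₀, hdq]; simp [Matrix.conjTranspose_mul, hMH, Matrix.mul_assoc]
  have hAAX : ∀ X : Matrix (Fin L) (Fin L) ℂ, A₀ᴴ * (A₀ * X) = -(dp * X) := fun X => by
    rw [← Matrix.mul_assoc, hAA, Matrix.neg_mul]
  have hABX : ∀ X : Matrix (Fin L) (Fin L) ℂ, A₀ᴴ * (B₀ * X) = -(dq * X) := fun X => by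
    rw [← Matrix.mul_assoc, hAB, Matrix.neg_mul]
  have hBAX : ∀ X : Matrix (Fin L) (Fin L) ℂ, B₀ᴴ * (A₀ * X) = -(dg * X) := fun X => by
    rw [← Matrix.mul_assoc, hBA, Matrix.neg_mul]
  have hBBX : ∀ X : Matrix (Fin L) (Fin L) ℂ, B₀ᴴ * (B₀ * X) = -(dh * X) := fun X => by
    rw [← Matrix.mul_assoc, hBB, Matrix.neg_mul]
  have hkey : (redA V πm πp E)ᴴ * Iop L * dA = Fᴴ * F := by
    have hAval : redA V πm πp E =
        Matrix.fromBlocks gi (-(gi * hm)) (pp * gi) (qq - pp * gi * hm) := rfl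
    rw [hAval, hF, hdA, Iop,
      Matrix.fromBlocks_conjTranspose,
      Matrix.fromBlocks_multiply, Matrix.fromBlocks_multiply,
      Matrix.conjTranspose_fromCols_eq_fromRows_conjTranspose,
      Matrix.fromRows_mul_fromCols]
    refine Matrix.fromBlocks_inj.mpr ⟨?_, ?_, ?_, ?_⟩
    · simp only [Matrix.conjTranspose_mul, Matrix.conjTranspose_neg, hppH, hmH, hqqH,
        Matrix.mul_zero, Matrix.zero_mul, Matrix.mul_neg, Matrix.neg_mul, Matrix.mul_one,
        Matrix.one_mul, add_zero, zero_add, neg_neg, Matrix.mul_add, Matrix.add_mul,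
        Matrix.mul_sub, Matrix.sub_mul, Matrix.mul_assoc, hc2, hc1, hdgi,
        hBA, hBB, hAA, hAB, hAAX, hABX, hBAX, hBBX]
      abel
    · simp only [Matrix.conjTranspose_mul, Matrix.conjTranspose_neg, hppH, hmH, hqqH,
        Matrix.mul_zero, Matrix.zero_mul, Matrix.mul_neg, Matrix.neg_mul, Matrix.mul_one,
        Matrix.one_mul, add_zero, zero_add, neg_neg, Matrix.mul_add, Matrix.add_mul,
        Matrix.mul_sub, Matrix.sub_mul, Matrix.mul_assoc, hc2, hc1, hdgi,
        hBA, hBB, hAA, hAB, hAAX, hABX, hBAX, hBBX]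
      abel
    · simp only [Matrix.conjTranspose_mul, Matrix.conjTranspose_neg, Matrix.conjTranspose_sub,
        hppH, hmH, hqqH,
        Matrix.mul_zero, Matrix.zero_mul, Matrix.mul_neg, Matrix.neg_mul, Matrix.mul_one,
        Matrix.one_mul, add_zero, zero_add, neg_neg, Matrix.mul_add, Matrix.add_mul,
        Matrix.mul_sub, Matrix.sub_mul, Matrix.mul_assoc, hc2, hc1, hdgi,
        hBA, hBB, hAA, hAB, hAAX, hABX, hBAX, hBBX]
      abel
    · simp only [Matrix.conjTranspose_mul, Matrix.conjTranspose_neg, Matrix.conjTranspose_sub,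
        hppH, hmH, hqqH,
        Matrix.mul_zero, Matrix.zero_mul, Matrix.mul_neg, Matrix.neg_mul, Matrix.mul_one,
        Matrix.one_mul, add_zero, zero_add, neg_neg, Matrix.mul_add, Matrix.add_mul,
        Matrix.mul_sub, Matrix.sub_mul, Matrix.mul_assoc, hc2, hc1, hdgi,
        hBA, hBB, hAA, hAB, hAAX, hABX, hBAX, hBBX]
      abel
  -- assembling
  rw [hDval]
  have hfin : (redT V πm πp That E)ᴴ * Iop L * (dA * Bc) = (F * Bc)ᴴ * (F * Bc) := by
    have h0 : redT V πm πp That E = redA V πm πp E * Bc := rfl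
    rw [h0, Matrix.conjTranspose_mul (redA V πm πp E) Bc, Matrix.conjTranspose_mul F Bc]
    calc Bcᴴ * (redA V πm πp E)ᴴ * Iop L * (dA * Bc)
        = Bcᴴ * ((redA V πm πp E)ᴴ * Iop L * dA) * Bc := by
          simp only [Matrix.mul_assoc]
      _ = Bcᴴ * (Fᴴ * F) * Bc := by rw [hkey]
      _ = Bcᴴ * Fᴴ * (F * Bc) := by simp only [Matrix.mul_assoc]
  rw [hfin]
  exact Matrix.posSemidef_conjTranspose_mul_self _
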